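/- Let (V, C) be an E3-Occ-E2-SAT instance with n variables and m clauses, and let P be a point configuration for (V, C) in ℝ² (as defined in the context). If there exists a family of at most 2n + ⌊(m − w)/2⌋ lines in ℝ² that cover all points of P, then there exists a truth assignment of the variables in V that satisfies at least w clauses of C. -/

import Mathlib

/-- A line in `ℝ²`: a one-dimensional affine subspace, described parametrically. -/
def IsLine (L : Set (ℝ × ℝ)) : Prop :=
  ∃ a d : ℝ × ℝ, d ≠ 0 ∧ L = {p : ℝ × ℝ | ∃ t : ℝ, p = a + t • d}

/-- Variable `i` occurs positively in clause `j`. -/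
def OccursPos {n m : ℕ} (clause : Fin m → (Fin n × Bool) × (Fin n × Bool))
    (i : Fin n) (j : Fin m) : Prop :=
  (clause j).1 = (i, true) ∨ (clause j).2 = (i, true)

/-- Variable `i` occurs negatively in clause `j`. -/
def OccursNeg {n m : ℕ} (clause : Fin m → (Fin n × Bool) × (Fin n × Bool))
    (i : Fin n) (j : Fin m) : Prop :=
  (clause j).1 = (i, false) ∨ (clause j).2 = (i, false)

/-- Assignment `g` satisfies clause `j` (a disjunction of two literals). -/
def Satisfies {n m : ℕ} (clause : Fin m → (Fin n × Bool) × (Fin n × Bool))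
    (g : Fin n → Bool) (j : Fin m) : Prop :=
  g (clause j).1.1 = (clause j).1.2 ∨ g (clause j).2.1 = (clause j).2.2

/-- An E3-Occ-E2-SAT instance: each clause has two literals on distinct variables, each
variable occurs in exactly three clauses, and each variable has both a positive and a
negative occurrence. -/
def IsE3OccE2SAT {n m : ℕ} (clause : Fin m → (Fin n × Bool) × (Fin n × Bool)) : Prop :=
  (∀ j : Fin m, (clause j).1.1 ≠ (clause j).2.1) ∧
  (∀ i : Fin n, {j : Fin m | (clause j).1.1 = i ∨ (clause j).2.1 = i}.ncard = 3) ∧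
  (∀ i : Fin n, (∃ j, OccursPos clause i j) ∧ ∃ j, OccursNeg clause i j)

/-- The set `P` of `4n + m` points: four variable points per variable and one clause
point per clause. -/
def ConfigPoints {n m : ℕ} (vpt : Fin n → Fin 4 → ℝ × ℝ) (cpt : Fin m → ℝ × ℝ) :
    Set (ℝ × ℝ) :=
  (Set.range fun x : Fin n × Fin 4 => vpt x.1 x.2) ∪ Set.range cpt

/-- The three designated collinear triples for variable `i`, given the three clauses
`tri i = (r, s, t)` in which it occurs and the flag `pos2 i` telling whether it has two
positive occurrences (in `r` and `s`) or two negative ones. -/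
def DesignatedTriples {n m : ℕ} (vpt : Fin n → Fin 4 → ℝ × ℝ) (cpt : Fin m → ℝ × ℝ)
    (tri : Fin n → Fin m × Fin m × Fin m) (pos2 : Fin n → Bool) (i : Fin n) :
    Set (Set (ℝ × ℝ)) :=
  if pos2 i then
    {{cpt (tri i).1, vpt i 0, vpt i 1}, {cpt (tri i).2.1, vpt i 2, vpt i 3},
      {cpt (tri i).2.2, vpt i 0, vpt i 2}}
  else
    {{cpt (tri i).1, vpt i 0, vpt i 2}, {cpt (tri i).2.1, vpt i 1, vpt i 3},
      {cpt (tri i).2.2, vpt i 0, vpt i 1}}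

/-- `vpt`, `cpt` form a point configuration for the instance `clause`: all `4n + m`
points are distinct; for each variable the designated triples (matching its occurrence
pattern) are collinear; and no other three points of the configuration are collinear. -/
def IsPointConfig {n m : ℕ} (clause : Fin m → (Fin n × Bool) × (Fin n × Bool))
    (vpt : Fin n → Fin 4 → ℝ × ℝ) (cpt : Fin m → ℝ × ℝ)
    (tri : Fin n → Fin m × Fin m × Fin m) (pos2 : Fin n → Bool) : Prop :=
  Function.Injective (Sum.elim (fun x : Fin n × Fin 4 => vpt x.1 x.2) cpt) ∧
  (∀ i : Fin n, (tri i).1 ≠ (tri i).2.1 ∧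
    (if pos2 i then
        OccursPos clause i (tri i).1 ∧ OccursPos clause i (tri i).2.1 ∧
          OccursNeg clause i (tri i).2.2
      else
        OccursNeg clause i (tri i).1 ∧ OccursNeg clause i (tri i).2.1 ∧
          OccursPos clause i (tri i).2.2) ∧
    ∀ S ∈ DesignatedTriples vpt cpt tri pos2 i, Collinear ℝ S) ∧
  (∀ p q r : ℝ × ℝ, p ∈ ConfigPoints vpt cpt → q ∈ ConfigPoints vpt cpt →
    r ∈ ConfigPoints vpt cpt → p ≠ q → p ≠ r → q ≠ r → Collinear ℝ {p, q, r} →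
    ∃ i : Fin n, ({p, q, r} : Set (ℝ × ℝ)) ∈ DesignatedTriples vpt cpt tri pos2 i)

namespace Stmt8

def vmem (b : Bool) : Fin 3 → Finset (Fin 4) :=
  if b then ![{0,1},{2,3},{0,2}] else ![{0,2},{1,3},{0,1}]

variable {n m : ℕ}

def clz (tri : Fin n → Fin m × Fin m × Fin m) (i : Fin n) : Fin 3 → Fin m :=
  ![(tri i).1, (tri i).2.1, (tri i).2.2]

def trip (tri : Fin n → Fin m × Fin m × Fin m) (pos2 : Fin n → Bool) (i : Fin n) (c : Fin 3) :
    Finset ((Fin n × Fin 4) ⊕ Fin m) :=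
  insert (Sum.inr (clz tri i c)) ((vmem (pos2 i) c).image (fun a => Sum.inl (i, a)))

lemma vmem_card (b : Bool) (c : Fin 3) : (vmem b c).card = 2 := by
  cases b <;> fin_cases c <;> decide

lemma vmem_nonempty (b : Bool) (c : Fin 3) : (vmem b c).Nonempty := by
  cases b <;> fin_cases c <;> decide

lemma vmem_inj (b : Bool) (c c' : Fin 3) (h : vmem b c = vmem b c') : c = c' := by
  revert h; cases b <;> fin_cases c <;> fin_cases c' <;> decide

lemma inl_mem_trip {tri : Fin n → Fin m × Fin m × Fin m} {pos2 : Fin n → Bool}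
    {i i' : Fin n} {a : Fin 4} {c : Fin 3} :
    Sum.inl (i', a) ∈ trip tri pos2 i c ↔ i' = i ∧ a ∈ vmem (pos2 i) c := by
  simp [trip, eq_comm]
  tauto

lemma inr_mem_trip {tri : Fin n → Fin m × Fin m × Fin m} {pos2 : Fin n → Bool}
    {i : Fin n} {j : Fin m} {c : Fin 3} :
    Sum.inr j ∈ trip tri pos2 i c ↔ j = clz tri i c := by
  simp [trip]

lemma trip_card (tri : Fin n → Fin m × Fin m × Fin m) (pos2 : Fin n → Bool)
    (i : Fin n) (c : Fin 3) : (trip tri pos2 i c).card = 3 := by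
  rw [trip, Finset.card_insert_of_notMem (by simp), Finset.card_image_of_injective _
    (fun a b hab => by simpa using hab)]
  rw [vmem_card]

lemma trip_inj {tri : Fin n → Fin m × Fin m × Fin m} {pos2 : Fin n → Bool}
    {i i' : Fin n} {c c' : Fin 3}
    (h : trip tri pos2 i c = trip tri pos2 i' c') : i = i' ∧ c = c' := by
  obtain ⟨a, ha⟩ := vmem_nonempty (pos2 i) c
  have h1 : Sum.inl (i, a) ∈ trip tri pos2 i' c' := by
    rw [← h]; exact inl_mem_trip.2 ⟨rfl, ha⟩
  have hii : i = i' := (inl_mem_trip.1 h1).1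
  subst hii
  refine ⟨rfl, vmem_inj (pos2 i) c c' ?_⟩
  ext b
  constructor <;> intro hb
  · exact (inl_mem_trip.1 (h ▸ inl_mem_trip.2 ⟨rfl, hb⟩)).2
  · exact (inl_mem_trip.1 (h.symm ▸ inl_mem_trip.2 ⟨rfl, hb⟩)).2

lemma key_count (b : Bool) (S : Finset (Fin 3)) :
    (S.biUnion (vmem b)).card ≤
      S.card + (S.filter (fun c => c ≠ 2 ∨ S ∩ {0,1} = ∅)).card := by
  revert S; cases b <;> decide

theorem isLine_collinear {L : Set (ℝ × ℝ)} (hL : IsLine L) {S : Set (ℝ × ℝ)} (hS : S ⊆ L) :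
    Collinear ℝ S := by
  obtain ⟨a, d, hd, rfl⟩ := hL
  refine (collinear_iff_exists_forall_eq_smul_vadd S).2 ⟨a, d, fun p hp => ?_⟩
  obtain ⟨t, ht⟩ := hS hp
  exact ⟨t, by simpa [add_comm] using ht⟩

theorem line_eq_param {L : Set (ℝ × ℝ)} (hL : IsLine L) {p q : ℝ × ℝ} (hpq : p ≠ q)
    (h1 : p ∈ L) (h2 : q ∈ L) : L = {x | ∃ u : ℝ, x = p + u • (q - p)} := by
  obtain ⟨a, d, hd, rfl⟩ := hL
  obtain ⟨t1, rfl⟩ := h1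
  obtain ⟨t2, rfl⟩ := h2
  have hne : t2 - t1 ≠ 0 := by
    intro hc
    apply hpq
    have : t1 = t2 := by linarith [sub_eq_zero.mp hc]
    rw [this]
  ext x
  simp only [Set.mem_setOf_eq]
  constructor
  · rintro ⟨t, rfl⟩
    refine ⟨(t - t1)/(t2 - t1), ?_⟩
    have h3 : (a + t2 • d) - (a + t1 • d) = (t2 - t1) • d := by
      rw [sub_smul]; abel
    rw [h3, smul_smul, div_mul_cancel₀ _ hne, add_assoc, ← add_smul]
    congr 1
    ring_nf
  · rintro ⟨u, rfl⟩
    refine ⟨t1 + u * (t2 - t1), ?_⟩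
    have h3 : (a + t2 • d) - (a + t1 • d) = (t2 - t1) • d := by
      rw [sub_smul]; abel
    rw [h3, smul_smul, add_smul, ← add_assoc, mul_comm]

theorem line_unique {L L' : Set (ℝ × ℝ)} (hL : IsLine L) (hL' : IsLine L') {p q : ℝ × ℝ}
    (hpq : p ≠ q) (h1 : p ∈ L) (h2 : q ∈ L) (h3 : p ∈ L') (h4 : q ∈ L') : L = L' := by
  rw [line_eq_param hL hpq h1 h2, line_eq_param hL' hpq h3 h4]

end Stmt8

/-- If there is a family of at most `2n + ⌊(m − w)/2⌋` lines covering all points of the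
configuration, then there is an assignment satisfying at least `w` clauses. -/
theorem stmt_8 {n m : ℕ} (clause : Fin m → (Fin n × Bool) × (Fin n × Bool))
    (hsat : IsE3OccE2SAT clause)
    (vpt : Fin n → Fin 4 → ℝ × ℝ) (cpt : Fin m → ℝ × ℝ)
    (tri : Fin n → Fin m × Fin m × Fin m) (pos2 : Fin n → Bool)
    (hconf : IsPointConfig clause vpt cpt tri pos2) (w : ℤ)
    (h : ∃ Ls : Finset (Set (ℝ × ℝ)),
      (Ls.card : ℤ) ≤ 2 * (n : ℤ) + ((m : ℤ) - w) / 2 ∧ (∀ L ∈ Ls, IsLine L) ∧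
      ∀ p ∈ ConfigPoints vpt cpt, ∃ L ∈ Ls, p ∈ L) :
    ∃ g : Fin n → Bool, w ≤ ({j : Fin m | Satisfies clause g j}.ncard : ℤ) := by
  classical
  obtain ⟨Ls, hk, hline, hcover⟩ := h
  set pt : (Fin n × Fin 4) ⊕ Fin m → ℝ × ℝ := Sum.elim (fun x => vpt x.1 x.2) cpt with hptdef
  have hpt : Function.Injective pt := hconf.1
  set onL : Set (ℝ × ℝ) → Finset ((Fin n × Fin 4) ⊕ Fin m) :=
    fun L => Finset.univ.filter (fun x => pt x ∈ L) with honLdef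
  have onL_mem : ∀ L x, x ∈ onL L ↔ pt x ∈ L := by
    intro L x; simp [honLdef]
  have hptCfg : ∀ x, pt x ∈ ConfigPoints vpt cpt := by
    intro x
    cases x with
    | inl v => exact Or.inl ⟨v, rfl⟩
    | inr j => exact Or.inr ⟨j, rfl⟩
  have G1 : ∀ L ∈ Ls, ∀ x y z, x ≠ y → x ≠ z → y ≠ z →
      pt x ∈ L → pt y ∈ L → pt z ∈ L →
      ∃ i c, ({x, y, z} : Finset _) = Stmt8.trip tri pos2 i c := by
    intro L hL x y z hxy hxz hyz hx hy hz
    have hsub : ({pt x, pt y, pt z} : Set (ℝ × ℝ)) ⊆ L := by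
      intro p hp
      simp only [Set.mem_insert_iff, Set.mem_singleton_iff] at hp
      rcases hp with rfl | rfl | rfl <;> assumption
    have hcol : Collinear ℝ ({pt x, pt y, pt z} : Set (ℝ × ℝ)) :=
      Stmt8.isLine_collinear (hline L hL) hsub
    obtain ⟨i, hmem⟩ := hconf.2.2 (pt x) (pt y) (pt z) (hptCfg x) (hptCfg y) (hptCfg z)
      (fun hc => hxy (hpt hc)) (fun hc => hxz (hpt hc)) (fun hc => hyz (hpt hc)) hcol
    refine ⟨i, ?_⟩
    have himg : ∀ c : Fin 3,
        ({pt x, pt y, pt z} : Set (ℝ × ℝ)) = pt '' ↑(Stmt8.trip tri pos2 i c) →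
        ({x, y, z} : Finset _) = Stmt8.trip tri pos2 i c := by
      intro c hc
      apply Finset.eq_of_subset_of_card_le
      · intro e he
        have hpe : pt e ∈ pt '' ↑(Stmt8.trip tri pos2 i c) := by
          rw [← hc]
          simp only [Finset.mem_insert, Finset.mem_singleton] at he
          rcases he with rfl | rfl | rfl <;> simp
        obtain ⟨e', he', heq⟩ := hpe
        rwa [← hpt heq]
      · rw [Stmt8.trip_card]
        exact le_of_eq (Finset.card_eq_three.mpr ⟨x, y, z, hxy, hxz, hyz, rfl⟩).symm
    cases hb : pos2 i with
    | true =>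
      rw [DesignatedTriples, if_pos (by rw [hb])] at hmem
      simp only [Set.mem_insert_iff, Set.mem_singleton_iff] at hmem
      rcases hmem with hS | hS | hS
      · exact ⟨0, himg 0 (by rw [hS]; simp [Stmt8.trip, Stmt8.clz, Stmt8.vmem, hb,
          Set.image_insert_eq, hptdef])⟩
      · exact ⟨1, himg 1 (by rw [hS]; simp [Stmt8.trip, Stmt8.clz, Stmt8.vmem, hb,
          Set.image_insert_eq, hptdef])⟩
      · exact ⟨2, himg 2 (by rw [hS]; simp [Stmt8.trip, Stmt8.clz, Stmt8.vmem, hb,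
          Set.image_insert_eq, hptdef])⟩
    | false =>
      rw [DesignatedTriples, if_neg (by rw [hb]; simp)] at hmem
      simp only [Set.mem_insert_iff, Set.mem_singleton_iff] at hmem
      rcases hmem with hS | hS | hS
      · exact ⟨0, himg 0 (by rw [hS]; simp [Stmt8.trip, Stmt8.clz, Stmt8.vmem, hb,
          Set.image_insert_eq, hptdef])⟩
      · exact ⟨1, himg 1 (by rw [hS]; simp [Stmt8.trip, Stmt8.clz, Stmt8.vmem, hb,
          Set.image_insert_eq, hptdef])⟩
      · exact ⟨2, himg 2 (by rw [hS]; simp [Stmt8.trip, Stmt8.clz, Stmt8.vmem, hb,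
          Set.image_insert_eq, hptdef])⟩
  have G2 : ∀ L ∈ Ls, (onL L).card ≤ 3 := by
    intro L hL
    by_contra hc
    push_neg at hc
    by_cases h2 : 1 < ((onL L).filter (fun x => x.isRight = true)).card
    · obtain ⟨x, hx, y, hy, hxy⟩ := Finset.one_lt_card.mp h2
      have hxF : x ∈ onL L := Finset.mem_of_mem_filter _ hx
      have hyF : y ∈ onL L := Finset.mem_of_mem_filter _ hy
      have hsub : ({x, y} : Finset _) ⊆ onL L := by
        intro e he
        simp only [Finset.mem_insert, Finset.mem_singleton] at he
        rcases he with rfl | rfl <;> assumption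
      have hpos : 0 < ((onL L) \ {x, y}).card := by
        rw [Finset.card_sdiff_of_subset hsub]
        have : ({x, y} : Finset _).card ≤ 2 := Finset.card_insert_le _ _ |>.trans (by simp)
        omega
      obtain ⟨z, hz⟩ := Finset.card_pos.mp hpos
      have hzF : z ∈ onL L := (Finset.mem_sdiff.mp hz).1
      have hzxy : z ≠ x ∧ z ≠ y := by
        have := (Finset.mem_sdiff.mp hz).2
        simp only [Finset.mem_insert, Finset.mem_singleton] at this
        tauto
      obtain ⟨i, c, htr⟩ := G1 L hL x y z hxy (Ne.symm hzxy.1) (Ne.symm hzxy.2)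
        ((onL_mem L x).1 hxF) ((onL_mem L y).1 hyF) ((onL_mem L z).1 hzF)
      obtain ⟨jx, rfl⟩ := Sum.isRight_iff.mp (Finset.mem_filter.mp hx).2
      obtain ⟨jy, rfl⟩ := Sum.isRight_iff.mp (Finset.mem_filter.mp hy).2
      have hjx : Sum.inr jx ∈ Stmt8.trip tri pos2 i c := by rw [← htr]; simp
      have hjy : Sum.inr jy ∈ Stmt8.trip tri pos2 i c := by rw [← htr]; simp
      have := (Stmt8.inr_mem_trip.1 hjx).trans (Stmt8.inr_mem_trip.1 hjy).symm
      exact hxy (by rw [this])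
    · push_neg at h2
      have h3 : 3 ≤ ((onL L).filter (fun x => ¬ x.isRight = true)).card := by
        have := Finset.card_filter_add_card_filter_not
          (s := onL L) (p := fun x => x.isRight = true)
        omega
      obtain ⟨s, hssub, hscard⟩ := Finset.exists_subset_card_eq h3
      obtain ⟨x, y, z, hxy, hxz, hyz, rfl⟩ := Finset.card_eq_three.mp hscard
      have hmemF : ∀ e ∈ ({x, y, z} : Finset _), e ∈ onL L ∧ ¬ e.isRight = true := by
        intro e he
        have := hssub he
        exact ⟨Finset.mem_of_mem_filter _ this, (Finset.mem_filter.mp this).2⟩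
      obtain ⟨i, c, htr⟩ := G1 L hL x y z hxy hxz hyz
        ((onL_mem L x).1 (hmemF x (by simp)).1) ((onL_mem L y).1 (hmemF y (by simp)).1)
        ((onL_mem L z).1 (hmemF z (by simp)).1)
      have hjr : Sum.inr (Stmt8.clz tri i c) ∈ ({x, y, z} : Finset _) := by
        rw [htr]; exact Stmt8.inr_mem_trip.2 rfl
      have := (hmemF _ hjr).2
      simp at this
  have G3 : ∀ L ∈ Ls, (onL L).card = 3 → ∃ i c, onL L = Stmt8.trip tri pos2 i c := by
    intro L hL hcard
    obtain ⟨x, y, z, hxy, hxz, hyz, hset⟩ := Finset.card_eq_three.mp hcard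
    have hx : pt x ∈ L := (onL_mem L x).1 (by rw [hset]; simp)
    have hy : pt y ∈ L := (onL_mem L y).1 (by rw [hset]; simp)
    have hz : pt z ∈ L := (onL_mem L z).1 (by rw [hset]; simp)
    obtain ⟨i, c, htr⟩ := G1 L hL x y z hxy hxz hyz hx hy hz
    exact ⟨i, c, by rw [hset, htr]⟩
  -- triple lines and the set of present triples
  set TL := Ls.filter (fun L => ∃ i c, onL L = Stmt8.trip tri pos2 i c) with hTLdef
  have hTLsub : TL ⊆ Ls := Finset.filter_subset _ _
  have G2' : ∀ L ∈ Ls, L ∉ TL → (onL L).card ≤ 2 := by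
    intro L hL hnot
    rcases Nat.lt_or_ge (onL L).card 3 with hlt | hge
    · omega
    · exact absurd (Finset.mem_filter.2 ⟨hL, G3 L hL (le_antisymm (G2 L hL) hge)⟩) hnot
  set A := (Finset.univ : Finset (Fin n × Fin 3)).filter
      (fun p => ∃ L ∈ Ls, onL L = Stmt8.trip tri pos2 p.1 p.2) with hAdef
  have hcard_AT : A.card = TL.card := by
    refine Finset.card_bij (fun p hp => ((Finset.mem_filter.mp hp).2).choose) ?_ ?_ ?_
    · intro p hp
      obtain ⟨hL, honL⟩ := ((Finset.mem_filter.mp hp).2).choose_spec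
      exact Finset.mem_filter.2 ⟨hL, p.1, p.2, honL⟩
    · intro p1 hp1 p2 hp2 heq
      obtain ⟨h1, e1⟩ := ((Finset.mem_filter.mp hp1).2).choose_spec
      obtain ⟨h2, e2⟩ := ((Finset.mem_filter.mp hp2).2).choose_spec
      have heq' : ((Finset.mem_filter.mp hp1).2).choose = ((Finset.mem_filter.mp hp2).2).choose := heq
      rw [heq'] at e1
      have := Stmt8.trip_inj (e1.symm.trans e2)
      exact Prod.ext this.1 this.2
    · intro L hLT
      obtain ⟨hL, i, c, honL⟩ := Finset.mem_filter.mp hLT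
      have hpA : (i, c) ∈ A := Finset.mem_filter.2 ⟨Finset.mem_univ _, L, hL, honL⟩
      refine ⟨(i, c), hpA, ?_⟩
      obtain ⟨hL', honL'⟩ := ((Finset.mem_filter.mp hpA).2).choose_spec
      obtain ⟨a, ha⟩ := Stmt8.vmem_nonempty (pos2 i) c
      have hx1 : Sum.inr (Stmt8.clz tri i c) ∈ Stmt8.trip tri pos2 i c :=
        Stmt8.inr_mem_trip.2 rfl
      have hx2 : Sum.inl (i, a) ∈ Stmt8.trip tri pos2 i c := Stmt8.inl_mem_trip.2 ⟨rfl, ha⟩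
      have hne : pt (Sum.inr (Stmt8.clz tri i c)) ≠ pt (Sum.inl (i, a)) :=
        fun hc => by simpa using hpt hc
      exact Stmt8.line_unique (hline _ hL') (hline _ hL) hne
        ((onL_mem _ _).1 (by rw [honL']; exact hx1)) ((onL_mem _ _).1 (by rw [honL']; exact hx2))
        ((onL_mem _ _).1 (honL ▸ hx1)) ((onL_mem _ _).1 (honL ▸ hx2))
  -- points not on any triple line
  set D := (Finset.univ : Finset ((Fin n × Fin 4) ⊕ Fin m)).filter
      (fun x => ∀ L ∈ TL, x ∉ onL L) with hDdef
  have hDsub : D ⊆ (Ls \ TL).biUnion onL := by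
    intro x hx
    obtain ⟨L, hL, hpL⟩ := hcover (pt x) (hptCfg x)
    have hxL : x ∈ onL L := (onL_mem L x).2 hpL
    have hnT : L ∉ TL := fun hT => (Finset.mem_filter.mp hx).2 L hT hxL
    exact Finset.mem_biUnion.2 ⟨L, Finset.mem_sdiff.2 ⟨hL, hnT⟩, hxL⟩
  have hDcap : D.card + 2 * TL.card ≤ 2 * Ls.card := by
    have h1 : D.card ≤ 2 * (Ls.card - TL.card) := by
      calc D.card ≤ ((Ls \ TL).biUnion onL).card := Finset.card_le_card hDsub
        _ ≤ ∑ L ∈ (Ls \ TL), (onL L).card := Finset.card_biUnion_le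
        _ ≤ ∑ _L ∈ (Ls \ TL), 2 := Finset.sum_le_sum (fun L hL =>
            G2' L (Finset.mem_sdiff.mp hL).1 (Finset.mem_sdiff.mp hL).2)
        _ = 2 * (Ls.card - TL.card) := by
            rw [Finset.sum_const, Finset.card_sdiff_of_subset hTLsub, smul_eq_mul, mul_comm]
    have h2 : TL.card ≤ Ls.card := Finset.card_le_card hTLsub
    omega
  set Afib : Fin n → Finset (Fin 3) :=
      (fun i => (Finset.univ : Finset (Fin 3)).filter (fun c => (i, c) ∈ A)) with hAfibdef
  set cov : Fin n → Finset (Fin 4) :=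
      (fun i => (Afib i).biUnion (Stmt8.vmem (pos2 i))) with hcovdef
  have hinlD : ∀ i : Fin n, ∀ a : Fin 4, (Sum.inl (i, a) ∈ D ↔ a ∉ cov i) := by
    intro i a
    simp only [hDdef, Finset.mem_filter, Finset.mem_univ, true_and]
    constructor
    · intro hD hc
      obtain ⟨c, hcA, hav⟩ := Finset.mem_biUnion.mp hc
      have hcA' : (i, c) ∈ A := (Finset.mem_filter.mp hcA).2
      obtain ⟨L, hL, honL⟩ := (Finset.mem_filter.mp hcA').2
      exact hD L (Finset.mem_filter.2 ⟨hL, i, c, honL⟩)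
        (by rw [honL]; exact Stmt8.inl_mem_trip.2 ⟨rfl, hav⟩)
    · intro hnc L hLT hxL
      obtain ⟨hL, i', c, honL⟩ := Finset.mem_filter.mp hLT
      rw [honL] at hxL
      obtain ⟨rfl, hav⟩ := Stmt8.inl_mem_trip.1 hxL
      exact hnc (Finset.mem_biUnion.2 ⟨c, Finset.mem_filter.2 ⟨Finset.mem_univ _,
        Finset.mem_filter.2 ⟨Finset.mem_univ _, L, hL, honL⟩⟩, hav⟩)
  set X := (Finset.univ : Finset (Fin m)).filter
      (fun j => ∃ L ∈ TL, Sum.inr j ∈ onL L) with hXdef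
  have hinrD : ∀ j : Fin m, (Sum.inr j ∈ D ↔ j ∉ X) := by
    intro j
    simp only [hDdef, hXdef, Finset.mem_filter, Finset.mem_univ, true_and]
    constructor
    · rintro hD ⟨L, hLT, hjL⟩
      exact hD L hLT hjL
    · intro hn L hLT hjL
      exact hn ⟨L, hLT, hjL⟩
  set Dv := (Finset.univ : Finset (Fin n × Fin 4)).filter (fun v => Sum.inl v ∈ D) with hDvdef
  set Dc := (Finset.univ : Finset (Fin m)).filter (fun j => Sum.inr j ∈ D) with hDcdef
  have hDsplit : D.card = Dv.card + Dc.card := by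
    rw [← Finset.card_filter_add_card_filter_not (s := D)
      (p := fun x => x.isLeft = true)]
    congr 1
    · rw [show D.filter (fun x => x.isLeft = true) = Dv.image Sum.inl from ?_,
        Finset.card_image_of_injective _ Sum.inl_injective]
      ext x
      cases x with
      | inl v =>
        simp [hDvdef]
      | inr j =>
        simp
    · rw [show D.filter (fun x => ¬ x.isLeft = true) = Dc.image Sum.inr from ?_,
        Finset.card_image_of_injective _ Sum.inr_injective]
      ext x
      cases x with
      | inl v =>
        simp
      | inr j =>
        simp [hDcdef]
  have hDv : Dv.card = ∑ i : Fin n, (4 - (cov i).card) := by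
    rw [Finset.card_eq_sum_card_fiberwise (f := Prod.fst) (t := Finset.univ)
      (fun x _ => Finset.mem_univ _)]
    refine Finset.sum_congr rfl (fun i _ => ?_)
    rw [show Dv.filter (fun v => v.1 = i) = (cov i)ᶜ.image (fun a => (i, a)) from ?_,
      Finset.card_image_of_injective _ (fun a b hab => by simpa using hab),
      Finset.card_compl]
    · simp
    · ext ⟨i', a⟩
      simp only [Finset.mem_filter, Finset.mem_image, Finset.mem_compl, hDvdef,
        Finset.mem_univ, true_and]
      constructor
      · rintro ⟨hD, rfl⟩
        exact ⟨a, (hinlD i' a).1 hD, rfl⟩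
      · rintro ⟨b, hb, heq⟩
        obtain ⟨rfl, rfl⟩ := Prod.mk.injEq .. ▸ heq
        exact ⟨(hinlD _ _).2 (by simpa using hb), rfl⟩
  have hDc : Dc.card = m - X.card := by
    rw [show Dc = Xᶜ from ?_, Finset.card_compl]
    · simp
    · ext j
      simp only [hDcdef, Finset.mem_filter, Finset.mem_univ, true_and, Finset.mem_compl]
      exact hinrD j
  set g : Fin n → Bool :=
      (fun i => if ((Afib i) ∩ {0, 1}).Nonempty then pos2 i else !(pos2 i)) with hgdef
  have hSat : ∀ i c, (i, c) ∈ A → ((c : Fin 3) ≠ 2 ∨ (Afib i) ∩ {0, 1} = ∅) →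
      Satisfies clause g (Stmt8.clz tri i c) := by
    intro i c hA hgood
    obtain ⟨-, hocc, -⟩ := hconf.2.1 i
    have hAfib : c ∈ Afib i := by
      simp only [hAfibdef, Finset.mem_filter, Finset.mem_univ, true_and]
      exact hA
    cases hb : pos2 i with
    | true =>
      rw [if_pos (by rw [hb])] at hocc
      obtain ⟨hr, hs, ht⟩ := hocc
      have hgt : ((Afib i) ∩ {0, 1}).Nonempty → g i = true := by
        intro hne; simp [hgdef, hne, hb]
      have hgf : ((Afib i) ∩ {0, 1} = ∅) → g i = false := by
        intro hemp; simp [hgdef, hemp, hb]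
      fin_cases c
      · have hg : g i = true := hgt ⟨0, Finset.mem_inter.2 ⟨hAfib, by decide⟩⟩
        show Satisfies clause g ((tri i).1)
        rcases hr with hcl | hcl
        · exact Or.inl (by rw [hcl, hg])
        · exact Or.inr (by rw [hcl, hg])
      · have hg : g i = true := hgt ⟨1, Finset.mem_inter.2 ⟨hAfib, by decide⟩⟩
        show Satisfies clause g ((tri i).2.1)
        rcases hs with hcl | hcl
        · exact Or.inl (by rw [hcl, hg])
        · exact Or.inr (by rw [hcl, hg])
      · have hemp : (Afib i) ∩ {0, 1} = ∅ := by
          rcases hgood with hc | hc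
          · exact absurd rfl hc
          · exact hc
        have hg : g i = false := hgf hemp
        show Satisfies clause g ((tri i).2.2)
        rcases ht with hcl | hcl
        · exact Or.inl (by rw [hcl, hg])
        · exact Or.inr (by rw [hcl, hg])
    | false =>
      rw [if_neg (by rw [hb]; simp)] at hocc
      obtain ⟨hr, hs, ht⟩ := hocc
      have hgt : ((Afib i) ∩ {0, 1}).Nonempty → g i = false := by
        intro hne; simp [hgdef, hne, hb]
      have hgf : ((Afib i) ∩ {0, 1} = ∅) → g i = true := by
        intro hemp; simp [hgdef, hemp, hb]
      fin_cases c
      · have hg : g i = false := hgt ⟨0, Finset.mem_inter.2 ⟨hAfib, by decide⟩⟩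
        show Satisfies clause g ((tri i).1)
        rcases hr with hcl | hcl
        · exact Or.inl (by rw [hcl, hg])
        · exact Or.inr (by rw [hcl, hg])
      · have hg : g i = false := hgt ⟨1, Finset.mem_inter.2 ⟨hAfib, by decide⟩⟩
        show Satisfies clause g ((tri i).2.1)
        rcases hs with hcl | hcl
        · exact Or.inl (by rw [hcl, hg])
        · exact Or.inr (by rw [hcl, hg])
      · have hemp : (Afib i) ∩ {0, 1} = ∅ := by
          rcases hgood with hc | hc
          · exact absurd rfl hc
          · exact hc
        have hg : g i = true := hgf hemp
        show Satisfies clause g ((tri i).2.2)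
        rcases ht with hcl | hcl
        · exact Or.inl (by rw [hcl, hg])
        · exact Or.inr (by rw [hcl, hg])
  set U := (Finset.univ : Finset (Fin m)).filter (fun j => ¬ Satisfies clause g j) with hUdef
  set goodA := A.filter (fun p => p.2 ≠ 2 ∨ (Afib p.1) ∩ {0, 1} = ∅) with hgoodAdef
  set badA := A.filter (fun p => ¬(p.2 ≠ 2 ∨ (Afib p.1) ∩ {0, 1} = ∅)) with hbadAdef
  have hgb : goodA.card + badA.card = A.card := by
    rw [hgoodAdef, hbadAdef]
    exact Finset.card_filter_add_card_filter_not _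
  have hUX : (U ∩ X).card ≤ badA.card := by
    rcases (U ∩ X).eq_empty_or_nonempty with he | hne
    · simp [he]
    obtain ⟨j0, hj0⟩ := hne
    have hj0X : j0 ∈ X := (Finset.mem_inter.mp hj0).2
    obtain ⟨L0, hL0T, -⟩ := (Finset.mem_filter.mp hj0X).2
    obtain ⟨-, i0, c0, -⟩ := Finset.mem_filter.mp hL0T
    have hex : ∀ j ∈ U ∩ X, ∃ p : Fin n × Fin 3,
        p ∈ badA ∧ j = Stmt8.clz tri p.1 p.2 := by
      intro j hj
      have hjU : j ∈ U := (Finset.mem_inter.mp hj).1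
      obtain ⟨L, hLT, hjL⟩ := (Finset.mem_filter.mp (Finset.mem_inter.mp hj).2).2
      obtain ⟨hL, i, c, honL⟩ := Finset.mem_filter.mp hLT
      rw [honL] at hjL
      have hjc : j = Stmt8.clz tri i c := Stmt8.inr_mem_trip.1 hjL
      have hA : (i, c) ∈ A := Finset.mem_filter.2 ⟨Finset.mem_univ _, L, hL, honL⟩
      refine ⟨(i, c), Finset.mem_filter.2 ⟨hA, ?_⟩, hjc⟩
      intro hgood
      exact (Finset.mem_filter.mp hjU).2 (hjc ▸ hSat i c hA hgood)
    set f : Fin m → Fin n × Fin 3 :=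
      (fun j => if hj : j ∈ U ∩ X then (hex j hj).choose else (i0, c0)) with hfdef
    apply Finset.card_le_card_of_injOn f
    · intro j hj
      rw [hfdef]; dsimp only; rw [dif_pos (Finset.mem_coe.mp hj)]
      exact ((hex j hj).choose_spec).1
    · intro j1 h1 j2 h2 hf
      have h1' : j1 ∈ U ∩ X := Finset.mem_coe.mp h1
      have h2' : j2 ∈ U ∩ X := Finset.mem_coe.mp h2
      have e1 := ((hex j1 h1').choose_spec).2
      have e2 := ((hex j2 h2').choose_spec).2
      rw [hfdef] at hf; dsimp only at hf; rw [dif_pos h1', dif_pos h2'] at hf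
      rw [e1, e2, hf]
  have hUcard : U.card + X.card ≤ m + badA.card := by
    have h1 : (U ∩ X).card + (U \ X).card = U.card := Finset.card_inter_add_card_sdiff U X
    have h2 : (U \ X).card ≤ Xᶜ.card :=
      Finset.card_le_card (fun j hj => Finset.mem_compl.2 (Finset.mem_sdiff.mp hj).2)
    have h3 : Xᶜ.card = m - X.card := by rw [Finset.card_compl]; simp
    have h4 : X.card ≤ m := by simpa using Finset.card_le_univ X
    omega
  have hAfibsum : A.card = ∑ i : Fin n, (Afib i).card := by
    rw [Finset.card_eq_sum_card_fiberwise (f := Prod.fst) (t := Finset.univ)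
      (fun x _ => Finset.mem_univ _)]
    refine Finset.sum_congr rfl (fun i _ => ?_)
    rw [show A.filter (fun p => p.1 = i) = (Afib i).image (fun c => (i, c)) from ?_,
      Finset.card_image_of_injective _ (fun a b hab => by simpa using hab)]
    ext ⟨i', c⟩
    simp only [Finset.mem_filter, Finset.mem_image]
    constructor
    · rintro ⟨hA', rfl⟩
      exact ⟨c, by simp only [hAfibdef, Finset.mem_filter, Finset.mem_univ, true_and]; exact hA', rfl⟩
    · rintro ⟨b, hb, heq⟩
      have hi : i = i' := congrArg Prod.fst heq
      have hc : b = c := congrArg Prod.snd heq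
      subst hi; subst hc
      simp only [hAfibdef, Finset.mem_filter, Finset.mem_univ, true_and] at hb
      exact ⟨hb, rfl⟩
  have hgoodsum : goodA.card = ∑ i : Fin n,
      ((Afib i).filter (fun c => c ≠ 2 ∨ (Afib i) ∩ {0, 1} = ∅)).card := by
    rw [Finset.card_eq_sum_card_fiberwise (f := Prod.fst) (t := Finset.univ)
      (fun x _ => Finset.mem_univ _)]
    refine Finset.sum_congr rfl (fun i _ => ?_)
    rw [show goodA.filter (fun p => p.1 = i)
        = ((Afib i).filter (fun c => c ≠ 2 ∨ (Afib i) ∩ {0, 1} = ∅)).image (fun c => (i, c)) from ?_,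
      Finset.card_image_of_injective _ (fun a b hab => by simpa using hab)]
    ext ⟨i', c⟩
    simp only [hgoodAdef, Finset.mem_filter, Finset.mem_image]
    constructor
    · rintro ⟨⟨hA', hgood⟩, rfl⟩
      exact ⟨c, ⟨by simp only [hAfibdef, Finset.mem_filter, Finset.mem_univ, true_and]; exact hA', hgood⟩, rfl⟩
    · rintro ⟨b, ⟨hb, hgood⟩, heq⟩
      have hi : i = i' := congrArg Prod.fst heq
      have hc : b = c := congrArg Prod.snd heq
      subst hi; subst hc
      simp only [hAfibdef, Finset.mem_filter, Finset.mem_univ, true_and] at hb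
      exact ⟨⟨hb, hgood⟩, rfl⟩
  have hper : ∀ i : Fin n, 4 ≤ (4 - (cov i).card) + ((Afib i).card +
      ((Afib i).filter (fun c => c ≠ 2 ∨ (Afib i) ∩ {0, 1} = ∅)).card) := by
    intro i
    have h1 := Stmt8.key_count (pos2 i) (Afib i)
    have h2 : (cov i).card ≤ 4 := by simpa using Finset.card_le_univ (cov i)
    have h3 : (cov i).card ≤ (Afib i).card +
        ((Afib i).filter (fun c => c ≠ 2 ∨ (Afib i) ∩ {0, 1} = ∅)).card := by
      rw [hcovdef]
      exact h1
    omega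
  have hsum4 : 4 * n ≤ (∑ i : Fin n, (4 - (cov i).card)) + (A.card + goodA.card) := by
    calc 4 * n = ∑ _i : Fin n, 4 := by simp [mul_comm]
      _ ≤ ∑ i : Fin n, ((4 - (cov i).card) + ((Afib i).card +
          ((Afib i).filter (fun c => c ≠ 2 ∨ (Afib i) ∩ {0, 1} = ∅)).card)) :=
        Finset.sum_le_sum (fun i _ => hper i)
      _ = (∑ i : Fin n, (4 - (cov i).card)) + (A.card + goodA.card) := by
        rw [Finset.sum_add_distrib, Finset.sum_add_distrib, hAfibsum, hgoodsum]
  refine ⟨g, ?_⟩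
  have hmain : U.card + 4 * n ≤ 2 * Ls.card := by
    have hXm : X.card ≤ m := by simpa using Finset.card_le_univ X
    omega
  have hsatcount : (Finset.univ.filter (fun j => Satisfies clause g j)).card + U.card = m := by
    rw [hUdef, Finset.card_filter_add_card_filter_not]
    simp
  have hncard : ({j : Fin m | Satisfies clause g j}).ncard
      = (Finset.univ.filter (fun j => Satisfies clause g j)).card := by
    rw [show {j : Fin m | Satisfies clause g j}
        = ↑(Finset.univ.filter (fun j => Satisfies clause g j)) from by ext j; simp]
    exact Set.ncard_coe_finset _
  rw [hncard]
  have h2q : 2 * (((m : ℤ) - w) / 2) ≤ (m : ℤ) - w := by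
    have ha := Int.mul_ediv_add_emod ((m : ℤ) - w) 2
    have hb : 0 ≤ ((m : ℤ) - w) % 2 := Int.emod_nonneg _ (by norm_num)
    omega
  have hmain' : (U.card : ℤ) + 4 * n ≤ 2 * Ls.card := by exact_mod_cast hmain
  have hcount' : ((Finset.univ.filter (fun j => Satisfies clause g j)).card : ℤ) + U.card = m := by
    exact_mod_cast hsatcount
  omega
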